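/- Suppose φ: ℝ^p → ℝ^m is bounded and differentiable with a bounded and Lipschitz differential Dφ, and y ∈ ℝ^m. Define f(μ) = ∫ φ dμ for μ a probability measure on ℝ^p with finite first moment, and ∇V[μ](x) = Dφ(x)ᵀ(f(μ) - y). Then there exists C > 0 such that for all probability measures μ, μ' with finite first moment and all x, x' ∈ ℝ^p: ‖∇V[μ](x) - ∇V[μ'](x')‖₂ ≤ C(‖x - x'‖₂ + W₁(μ, μ')), where W₁ is the 1-Wasserstein distance. -/

import Mathlib

open MeasureTheory

/-- The 1-Wasserstein distance, in dual (Kantorovich–Rubinstein) form: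
`W₁(μ,ν) = sup over 1-Lipschitz ψ of ∫ψ dμ - ∫ψ dν`. -/
noncomputable def W1 {p : ℕ} (μ ν : Measure (EuclideanSpace ℝ (Fin p))) : ℝ :=
  sSup {r : ℝ | ∃ ψ : EuclideanSpace ℝ (Fin p) → ℝ, LipschitzWith 1 ψ ∧
    r = (∫ x, ψ x ∂μ) - ∫ x, ψ x ∂ν}

set_option maxHeartbeats 1000000 in
/-- If `φ` is bounded and differentiable with bounded Lipschitz differential, and
`∇V[μ](x) = Dφ(x)ᵀ(∫φ dμ - y)`, then `∇V` is jointly Lipschitz in `(μ, x)`: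
`‖∇V[μ](x) - ∇V[μ'](x')‖ ≤ C(‖x - x'‖ + W₁(μ, μ'))`. -/
theorem gradV_lipschitz {p m : ℕ}
    (φ : EuclideanSpace ℝ (Fin p) → EuclideanSpace ℝ (Fin m))
    (Dφ : EuclideanSpace ℝ (Fin p) →
      (EuclideanSpace ℝ (Fin p) →L[ℝ] EuclideanSpace ℝ (Fin m)))
    (Mφ MD : ℝ) (L : NNReal)
    (hφb : ∀ x, ‖φ x‖ ≤ Mφ)
    (hderiv : ∀ x, HasFDerivAt φ (Dφ x) x)
    (hDb : ∀ x, ‖Dφ x‖ ≤ MD)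
    (hDlip : LipschitzWith L Dφ)
    (y : EuclideanSpace ℝ (Fin m)) :
    ∃ C > 0, ∀ (μ μ' : Measure (EuclideanSpace ℝ (Fin p))),
      IsProbabilityMeasure μ → IsProbabilityMeasure μ' →
      Integrable (fun x => ‖x‖) μ → Integrable (fun x => ‖x‖) μ' →
      ∀ x x' : EuclideanSpace ℝ (Fin p),
        ‖ContinuousLinearMap.adjoint (Dφ x) ((∫ z, φ z ∂μ) - y) -
            ContinuousLinearMap.adjoint (Dφ x') ((∫ z, φ z ∂μ') - y)‖
          ≤ C * (‖x - x'‖ + W1 μ μ') := by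
  have hMφ0 : 0 ≤ Mφ := le_trans (norm_nonneg _) (hφb 0)
  have hMD0 : 0 ≤ MD := le_trans (norm_nonneg _) (hDb 0)
  set M : ℝ := MD + 1 with hM
  have hMpos : 0 < M := by positivity
  -- φ is continuous
  have hφc : Continuous φ := by
    have : Differentiable ℝ φ := fun x => (hderiv x).differentiableAt
    exact this.continuous
  -- φ is M-Lipschitz
  have hφlip : LipschitzWith M.toNNReal φ := by
    apply lipschitzWith_of_nnnorm_fderiv_le (fun x => (hderiv x).differentiableAt)
    intro x
    have : fderiv ℝ φ x = Dφ x := (hderiv x).fderiv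
    rw [← NNReal.coe_le_coe, coe_nnnorm, Real.coe_toNNReal _ hMpos.le, this]
    exact (hDb x).trans (by linarith)
  set C : ℝ := max (L * (Mφ + ‖y‖)) (MD * M) + 1 with hC
  have hCpos : 0 < C := by
    have : (0:ℝ) ≤ max (L * (Mφ + ‖y‖)) (MD * M) :=
      le_max_of_le_right (by positivity)
    linarith
  refine ⟨C, hCpos, ?_⟩
  intro μ μ' hμ hμ' hint hint' x x'
  -- integrability of φ
  have hφint : ∀ (ν : Measure (EuclideanSpace ℝ (Fin p))), IsProbabilityMeasure ν →
      Integrable φ ν := by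
    intro ν hν
    exact (integrable_const Mφ).mono' (hφc.aestronglyMeasurable)
      (Filter.Eventually.of_forall fun z => hφb z)
  have hφμ := hφint μ hμ
  have hφμ' := hφint μ' hμ'
  -- bound on ∫ φ
  have hIb : ∀ (ν : Measure (EuclideanSpace ℝ (Fin p))), IsProbabilityMeasure ν →
      ‖∫ z, φ z ∂ν‖ ≤ Mφ := by
    intro ν hν
    calc ‖∫ z, φ z ∂ν‖ ≤ ∫ z, ‖φ z‖ ∂ν := norm_integral_le_integral_norm _
      _ ≤ ∫ _, Mφ ∂ν := integral_mono (hφint ν hν).norm (integrable_const _)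
            (fun z => hφb z)
      _ = Mφ := by simp
  -- W1 nonneg and the set is bounded above
  have hbdd : BddAbove {r : ℝ | ∃ ψ : EuclideanSpace ℝ (Fin p) → ℝ, LipschitzWith 1 ψ ∧
      r = (∫ z, ψ z ∂μ) - ∫ z, ψ z ∂μ'} := by
    refine ⟨(∫ z, ‖z‖ ∂μ) + ∫ z, ‖z‖ ∂μ', ?_⟩
    rintro r ⟨ψ, hψ, rfl⟩
    have hψint : ∀ (ν : Measure (EuclideanSpace ℝ (Fin p))), IsProbabilityMeasure ν →
        Integrable (fun z => ‖z‖) ν → Integrable ψ ν := by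
      intro ν hν hn
      refine (hn.add (integrable_const |ψ 0|)).mono'
        (hψ.continuous.aestronglyMeasurable) ?_
      refine Filter.Eventually.of_forall fun z => ?_
      have := hψ.dist_le_mul z 0
      simp only [NNReal.coe_one, one_mul] at this
      have hz : dist z 0 = ‖z‖ := by simp [dist_eq_norm]
      calc ‖ψ z‖ = |ψ z| := rfl
        _ ≤ |ψ z - ψ 0| + |ψ 0| := by
            have := abs_sub_abs_le_abs_sub (ψ z) (ψ 0); linarith [abs_abs (ψ 0)]
        _ ≤ ‖z‖ + |ψ 0| := by
            have h1 : |ψ z - ψ 0| = dist (ψ z) (ψ 0) := by rw [Real.dist_eq]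
            rw [h1]; rw [hz] at this; linarith
    have h1 := hψint μ hμ hint
    have h2 := hψint μ' hμ' hint'
    -- bound each integral using ψ z - ψ 0
    have key : ∀ (ν : Measure (EuclideanSpace ℝ (Fin p))) (hν : IsProbabilityMeasure ν)
        (hn : Integrable (fun z => ‖z‖) ν) (hi : Integrable ψ ν),
        |(∫ z, ψ z ∂ν) - ψ 0| ≤ ∫ z, ‖z‖ ∂ν := by
      intro ν hν hn hi
      have : (∫ z, ψ z ∂ν) - ψ 0 = ∫ z, (ψ z - ψ 0) ∂ν := by
        rw [integral_sub hi (integrable_const _)]; simp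
      rw [this]
      calc |∫ z, (ψ z - ψ 0) ∂ν| ≤ ∫ z, |ψ z - ψ 0| ∂ν := by
            simpa using norm_integral_le_integral_norm (μ := ν) (fun z => ψ z - ψ 0)
        _ ≤ ∫ z, ‖z‖ ∂ν := by
            refine integral_mono ((hi.sub (integrable_const _)).abs) hn fun z => ?_
            have := hψ.dist_le_mul z 0
            simp only [NNReal.coe_one, one_mul] at this
            rw [Real.dist_eq] at this
            simpa [dist_eq_norm] using this
    have k1 := key μ hμ hint h1
    have k2 := key μ' hμ' hint' h2
    have := abs_le.mp k1
    have := abs_le.mp k2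
    cases abs_le.mp k1 with
    | intro a b => cases abs_le.mp k2 with
      | intro c d => linarith
  have hW1nonneg : 0 ≤ W1 μ μ' := by
    apply le_csSup hbdd
    exact ⟨fun _ => 0, LipschitzWith.const' 0, by simp⟩
  -- key: ‖∫φdμ - ∫φdμ'‖ ≤ M * W1 μ μ'
  have hkey : ‖(∫ z, φ z ∂μ) - ∫ z, φ z ∂μ'‖ ≤ M * W1 μ μ' := by
    set v := (∫ z, φ z ∂μ) - ∫ z, φ z ∂μ' with hv
    rcases eq_or_ne v 0 with h0 | h0
    · rw [h0, norm_zero]; positivity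
    · set u : EuclideanSpace ℝ (Fin m) := ‖v‖⁻¹ • v with hu
      have hun : ‖u‖ = 1 := by
        rw [hu, norm_smul, norm_inv, norm_norm,
          inv_mul_cancel₀ (norm_ne_zero_iff.mpr h0)]
      set ψ : EuclideanSpace ℝ (Fin p) → ℝ := fun z => M⁻¹ * inner ℝ u (φ z) with hψdef
      have hψlip : LipschitzWith 1 ψ := by
        refine LipschitzWith.of_dist_le_mul fun a b => ?_
        rw [Real.dist_eq]
        have : ψ a - ψ b = M⁻¹ * inner ℝ u (φ a - φ b) := by
          rw [hψdef]; simp [inner_sub_right]; ring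
        rw [this, abs_mul, abs_inv, abs_of_pos hMpos]
        have h1 : |(inner ℝ u (φ a - φ b) : ℝ)| ≤ ‖u‖ * ‖φ a - φ b‖ := abs_real_inner_le_norm _ _
        have h2 : ‖φ a - φ b‖ ≤ M * dist a b := by
          have := hφlip.dist_le_mul a b
          rw [Real.coe_toNNReal _ hMpos.le] at this
          simpa [dist_eq_norm] using this
        rw [hun, one_mul] at h1
        calc M⁻¹ * |(inner ℝ u (φ a - φ b) : ℝ)| ≤ M⁻¹ * (M * dist a b) := by
              apply mul_le_mul_of_nonneg_left (h1.trans h2) (by positivity)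
          _ = dist a b := by field_simp
          _ = 1 * dist a b := (one_mul _).symm
      have hmem : (∫ z, ψ z ∂μ) - ∫ z, ψ z ∂μ' ∈ {r : ℝ |
          ∃ ψ : EuclideanSpace ℝ (Fin p) → ℝ, LipschitzWith 1 ψ ∧
          r = (∫ z, ψ z ∂μ) - ∫ z, ψ z ∂μ'} := ⟨ψ, hψlip, rfl⟩
      have hle : (∫ z, ψ z ∂μ) - ∫ z, ψ z ∂μ' ≤ W1 μ μ' := le_csSup hbdd hmem
      have hcompute : (∫ z, ψ z ∂μ) - ∫ z, ψ z ∂μ' = M⁻¹ * ‖v‖ := by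
        have e1 : ∀ (ν : Measure (EuclideanSpace ℝ (Fin p))), Integrable φ ν →
            (∫ z, ψ z ∂ν) = M⁻¹ * inner ℝ u (∫ z, φ z ∂ν) := by
          intro ν hi
          rw [hψdef]
          rw [integral_const_mul]
          congr 1
          exact integral_inner hi u
        rw [e1 μ hφμ, e1 μ' hφμ']
        have : (inner ℝ u (∫ z, φ z ∂μ) : ℝ) - inner ℝ u (∫ z, φ z ∂μ') = inner ℝ u v := by
          rw [hv, inner_sub_right]
        rw [← mul_sub, this]
        have : (inner ℝ u v : ℝ) = ‖v‖ := by
          rw [hu, real_inner_smul_left, real_inner_self_eq_norm_mul_norm,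
            ← mul_assoc, inv_mul_cancel₀ (norm_ne_zero_iff.mpr h0), one_mul]
        rw [this]
      rw [hcompute] at hle
      calc ‖v‖ = M * (M⁻¹ * ‖v‖) := by field_simp
        _ ≤ M * W1 μ μ' := by
            apply mul_le_mul_of_nonneg_left hle hMpos.le
  -- now the main estimate
  set Iμ := ∫ z, φ z ∂μ with hIμ
  set Iμ' := ∫ z, φ z ∂μ' with hIμ'
  have hsplit : ContinuousLinearMap.adjoint (Dφ x) (Iμ - y) -
      ContinuousLinearMap.adjoint (Dφ x') (Iμ' - y) =
      (ContinuousLinearMap.adjoint (Dφ x) - ContinuousLinearMap.adjoint (Dφ x')) (Iμ - y)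
      + ContinuousLinearMap.adjoint (Dφ x') (Iμ - Iμ') := by
    simp only [ContinuousLinearMap.sub_apply, map_sub]
    abel
  rw [hsplit]
  have hadj_sub : ContinuousLinearMap.adjoint (Dφ x) - ContinuousLinearMap.adjoint (Dφ x')
      = ContinuousLinearMap.adjoint (Dφ x - Dφ x') := (map_sub _ _ _).symm
  have hterm1 : ‖(ContinuousLinearMap.adjoint (Dφ x) -
      ContinuousLinearMap.adjoint (Dφ x')) (Iμ - y)‖ ≤ (L * (Mφ + ‖y‖)) * ‖x - x'‖ := by
    rw [hadj_sub]
    calc ‖ContinuousLinearMap.adjoint (Dφ x - Dφ x') (Iμ - y)‖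
        ≤ ‖ContinuousLinearMap.adjoint (Dφ x - Dφ x')‖ * ‖Iμ - y‖ :=
          ContinuousLinearMap.le_opNorm _ _
      _ = ‖Dφ x - Dφ x'‖ * ‖Iμ - y‖ := by
          rw [LinearIsometryEquiv.norm_map]
      _ ≤ (L * ‖x - x'‖) * (Mφ + ‖y‖) := by
          apply mul_le_mul
          · have := hDlip.dist_le_mul x x'
            simpa [dist_eq_norm] using this
          · calc ‖Iμ - y‖ ≤ ‖Iμ‖ + ‖y‖ := norm_sub_le _ _
              _ ≤ Mφ + ‖y‖ := by linarith [hIb μ hμ]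
          · exact norm_nonneg _
          · positivity
      _ = (L * (Mφ + ‖y‖)) * ‖x - x'‖ := by ring
  have hterm2 : ‖ContinuousLinearMap.adjoint (Dφ x') (Iμ - Iμ')‖
      ≤ (MD * M) * W1 μ μ' := by
    calc ‖ContinuousLinearMap.adjoint (Dφ x') (Iμ - Iμ')‖
        ≤ ‖ContinuousLinearMap.adjoint (Dφ x')‖ * ‖Iμ - Iμ'‖ :=
          ContinuousLinearMap.le_opNorm _ _
      _ = ‖Dφ x'‖ * ‖Iμ - Iμ'‖ := by rw [LinearIsometryEquiv.norm_map]
      _ ≤ MD * (M * W1 μ μ') := by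
          apply mul_le_mul (hDb x') hkey (norm_nonneg _) hMD0
      _ = (MD * M) * W1 μ μ' := by ring
  calc ‖(ContinuousLinearMap.adjoint (Dφ x) - ContinuousLinearMap.adjoint (Dφ x')) (Iμ - y)
        + ContinuousLinearMap.adjoint (Dφ x') (Iμ - Iμ')‖
      ≤ ‖(ContinuousLinearMap.adjoint (Dφ x) -
          ContinuousLinearMap.adjoint (Dφ x')) (Iμ - y)‖
        + ‖ContinuousLinearMap.adjoint (Dφ x') (Iμ - Iμ')‖ := norm_add_le _ _
    _ ≤ (L * (Mφ + ‖y‖)) * ‖x - x'‖ + (MD * M) * W1 μ μ' := add_le_add hterm1 hterm2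
    _ ≤ C * ‖x - x'‖ + C * W1 μ μ' := by
        apply add_le_add
        · apply mul_le_mul_of_nonneg_right _ (norm_nonneg _)
          rw [hC]; exact le_trans (le_max_left _ _) (by linarith)
        · apply mul_le_mul_of_nonneg_right _ hW1nonneg
          rw [hC]; exact le_trans (le_max_right _ _) (by linarith)
    _ = C * (‖x - x'‖ + W1 μ μ') := by ring
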